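/- Let Σ = (X, Y, M(U), φ, h) be a linear control system with U ≠ {0} that is exponentially stable, robust with respect to the input, and strictly causal. Then the minimum IOS-gain γ, the minimum output asymptotic gain γ_as, and the supremum over T > 0 of the optimal value V(T) := sup{ ‖h(φ(T,0,u))‖_Y : u ∈ M(U), sup_{0≤t≤T}‖u(t)‖_U = 1 } all coincide: γ = γ_as = sup_{T>0} V(T). -/

import Mathlib

open Filter

noncomputable section

/-- A linear control system `Σ = (X, Y, M(U), φ, h)` in the sense of
Karafyllis, "On the Relation of IOS-Gains and Asymptotic Gains For Linear Systems".
Inputs are functions `u : ℝ → U`; only values on `[0, ∞)` are relevant. -/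
structure LinearControlSystem (X Y U : Type*)
    [NormedAddCommGroup X] [NormedSpace ℝ X]
    [NormedAddCommGroup Y] [NormedSpace ℝ Y]
    [NormedAddCommGroup U] [NormedSpace ℝ U] where
  /-- the set `M(U)` of admissible inputs -/
  inputs : Set (ℝ → U)
  /-- the transition map `φ` -/
  trans : ℝ → X → (ℝ → U) → X
  /-- the continuous linear output map `h : X → Y` -/
  out : X →L[ℝ] Y
  /-- `U ≠ {0}` -/
  U_nontrivial : ∃ v : U, v ≠ 0
  /-- inputs are locally bounded -/
  loc_bdd : ∀ u ∈ inputs, ∀ T : ℝ, BddAbove ((fun s => ‖u s‖) '' Set.Icc 0 T)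
  zero_mem : (0 : ℝ → U) ∈ inputs
  add_mem : ∀ u₁ ∈ inputs, ∀ u₂ ∈ inputs, u₁ + u₂ ∈ inputs
  smul_mem : ∀ u ∈ inputs, ∀ c : ℝ, c • u ∈ inputs
  concat_le_mem : ∀ u₁ ∈ inputs, ∀ u₂ ∈ inputs, ∀ τ > (0 : ℝ),
    (fun t => if t ≤ τ then u₁ t else u₂ (t - τ)) ∈ inputs
  concat_lt_mem : ∀ u₁ ∈ inputs, ∀ u₂ ∈ inputs, ∀ τ > (0 : ℝ),
    (fun t => if t < τ then u₁ t else u₂ (t - τ)) ∈ inputs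
  /-- closure under the shift operator `δ_τ` -/
  shift_mem : ∀ u ∈ inputs, ∀ τ > (0 : ℝ), (fun t => u (t + τ)) ∈ inputs
  exists_input_val : ∀ v : U, ∃ u ∈ inputs, u 0 = v
  /-- closure under `T`-periodic extension -/
  periodic_ext_mem : ∀ u ∈ inputs, ∀ T > (0 : ℝ),
    (fun t => u (t - T * ⌊t / T⌋)) ∈ inputs
  identity : ∀ x : X, ∀ u ∈ inputs, trans 0 x u = x
  causality : ∀ t ≥ (0 : ℝ), ∀ x : X, ∀ u ∈ inputs, ∀ v ∈ inputs,
    (∀ s, 0 ≤ s → s ≤ t → u s = v s) → trans t x u = trans t x v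
  semigroup : ∀ x : X, ∀ u ∈ inputs, ∀ τ t : ℝ, 0 ≤ τ → τ ≤ t →
    trans t x u = trans (t - τ) (trans τ x u) (fun s => u (s + τ))
  linearity : ∀ t ≥ (0 : ℝ), ∀ x₁ x₂ : X, ∀ u₁ ∈ inputs, ∀ u₂ ∈ inputs, ∀ a b : ℝ,
    trans t (a • x₁ + b • x₂) (a • u₁ + b • u₂) = a • trans t x₁ u₁ + b • trans t x₂ u₂

namespace LinearControlSystem

variable {X Y U : Type*}
    [NormedAddCommGroup X] [NormedSpace ℝ X]
    [NormedAddCommGroup Y] [NormedSpace ℝ Y]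
    [NormedAddCommGroup U] [NormedSpace ℝ U]

/-- `sup_{0 ≤ s ≤ t} ‖u(s)‖`. -/
def runSup (u : ℝ → U) (t : ℝ) : ℝ :=
  sSup ((fun s => ‖u s‖) '' Set.Icc 0 t)

/-- `sup_{s ≥ 0} ‖u(s)‖`. -/
def supNorm (u : ℝ → U) : ℝ :=
  sSup ((fun s => ‖u s‖) '' Set.Ici 0)

/-- exponential stability with the specific constants `M, σ > 0` -/
def IsES (sys : LinearControlSystem X Y U) (M σ : ℝ) : Prop :=
  0 < M ∧ 0 < σ ∧ ∀ x : X, ∀ t ≥ (0 : ℝ),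
    ‖sys.trans t x 0‖ ≤ M * Real.exp (-σ * t) * ‖x‖

/-- exponential stability (ES) -/
def ES (sys : LinearControlSystem X Y U) : Prop :=
  ∃ M σ : ℝ, sys.IsES M σ

/-- robustness with respect to the input, with the specific nondecreasing function `b` -/
def IsRobust (sys : LinearControlSystem X Y U) (b : ℝ → ℝ) : Prop :=
  MonotoneOn b (Set.Ici 0) ∧ (∀ t, 0 ≤ b t) ∧
    ∀ u ∈ sys.inputs, ∀ t ≥ (0 : ℝ), ‖sys.trans t 0 u‖ ≤ b t * runSup u t

/-- robustness with respect to the input -/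
def Robust (sys : LinearControlSystem X Y U) : Prop :=
  ∃ b : ℝ → ℝ, sys.IsRobust b

/-- strict causality -/
def StrictlyCausal (sys : LinearControlSystem X Y U) : Prop :=
  ∀ t > (0 : ℝ), ∀ u ∈ sys.inputs, ∀ v ∈ sys.inputs,
    (∀ s, 0 ≤ s → s < t → u s = v s) → sys.trans t 0 u = sys.trans t 0 v

/-- the minimum IOS-gain `γ` -/
def gain (sys : LinearControlSystem X Y U) : ℝ :=
  sSup {r | ∃ t ≥ (0 : ℝ), ∃ u ∈ sys.inputs, runSup u t = 1 ∧ r = ‖sys.out (sys.trans t 0 u)‖}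

/-- the minimum output asymptotic gain `γ_as` -/
def asympGain (sys : LinearControlSystem X Y U) : ℝ :=
  sSup {r | ∃ u ∈ sys.inputs, supNorm u = 1 ∧
    r = limsup (fun t => ‖sys.out (sys.trans t 0 u)‖) atTop}

/-- the value `V(T)` of the optimal control problem (4.5) -/
def V (sys : LinearControlSystem X Y U) (T : ℝ) : ℝ :=
  sSup {r | ∃ u ∈ sys.inputs, runSup u T = 1 ∧ r = ‖sys.out (sys.trans T 0 u)‖}

/-- periodic inputs -/
def Periodic (u : ℝ → U) : Prop :=
  ∃ T > (0 : ℝ), ∀ t ≥ (0 : ℝ), u (t + T) = u t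

end LinearControlSystem

section Aux

open LinearControlSystem

variable {X Y U : Type*}
    [NormedAddCommGroup X] [NormedSpace ℝ X]
    [NormedAddCommGroup Y] [NormedSpace ℝ Y]
    [NormedAddCommGroup U] [NormedSpace ℝ U]
    (sys : LinearControlSystem X Y U)

lemma aux_trans00 (t : ℝ) (ht : 0 ≤ t) : sys.trans t 0 0 = 0 := by
  have h := sys.linearity t ht 0 0 0 sys.zero_mem 0 sys.zero_mem 0 0
  simpa using h

lemma aux_transSmul (t : ℝ) (ht : 0 ≤ t) (u : ℝ → U) (hu : u ∈ sys.inputs) (c : ℝ) :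
    sys.trans t 0 (c • u) = c • sys.trans t 0 u := by
  have h := sys.linearity t ht 0 0 u hu 0 sys.zero_mem c 0
  simpa using h

lemma aux_transAdd (t : ℝ) (ht : 0 ≤ t) (u : ℝ → U) (hu : u ∈ sys.inputs)
    (v : ℝ → U) (hv : v ∈ sys.inputs) :
    sys.trans t 0 (u + v) = sys.trans t 0 u + sys.trans t 0 v := by
  have h := sys.linearity t ht 0 0 u hu v hv 1 1
  simpa using h

lemma aux_runSup_nonneg (u : ℝ → U) (t : ℝ) : 0 ≤ runSup u t := by
  apply Real.sSup_nonneg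
  rintro x ⟨s, -, rfl⟩
  exact norm_nonneg _

lemma aux_supNorm_nonneg (u : ℝ → U) : 0 ≤ supNorm u := by
  apply Real.sSup_nonneg
  rintro x ⟨s, -, rfl⟩
  exact norm_nonneg _

lemma aux_le_runSup (u : ℝ → U) (hu : u ∈ sys.inputs) {s t : ℝ}
    (hs : s ∈ Set.Icc 0 t) : ‖u s‖ ≤ runSup u t :=
  le_csSup (sys.loc_bdd u hu t) ⟨s, hs, rfl⟩

lemma aux_runSup_le (u : ℝ → U) (t a : ℝ) (ha : 0 ≤ a)
    (h : ∀ s ∈ Set.Icc (0:ℝ) t, ‖u s‖ ≤ a) : runSup u t ≤ a := by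
  apply Real.sSup_le _ ha
  rintro x ⟨s, hs, rfl⟩
  exact h s hs

lemma aux_runSup_smul (u : ℝ → U) (hu : u ∈ sys.inputs) (t : ℝ) (ht : 0 ≤ t)
    (c : ℝ) (hc : 0 ≤ c) : runSup (c • u) t = c * runSup u t := by
  rcases eq_or_lt_of_le hc with rfl | hc0
  · have h0 : runSup ((0:ℝ) • u) t = 0 := by
      apply le_antisymm
      · apply aux_runSup_le _ _ _ le_rfl
        intro s _
        simp
      · exact aux_runSup_nonneg _ _
    simpa using h0
  · apply le_antisymm
    · apply aux_runSup_le _ _ _ (mul_nonneg hc (aux_runSup_nonneg u t))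
      intro s hs
      have := aux_le_runSup sys u hu hs
      calc ‖(c • u) s‖ = c * ‖u s‖ := by
            simp [norm_smul, abs_of_nonneg hc]
        _ ≤ c * runSup u t := by nlinarith
    · have hmem : c • u ∈ sys.inputs := sys.smul_mem u hu c
      have h1 : runSup u t ≤ c⁻¹ * runSup (c • u) t := by
        apply aux_runSup_le _ _ _
          (mul_nonneg (by positivity) (aux_runSup_nonneg _ _))
        intro s hs
        have h2 := aux_le_runSup sys (c • u) hmem hs
        have h3 : ‖(c • u) s‖ = c * ‖u s‖ := by
          simp [norm_smul, abs_of_nonneg hc]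
        rw [h3] at h2
        calc ‖u s‖ = c⁻¹ * (c * ‖u s‖) := by field_simp
          _ ≤ c⁻¹ * runSup (c • u) t := by
              apply mul_le_mul_of_nonneg_left h2 (by positivity)
      calc c * runSup u t ≤ c * (c⁻¹ * runSup (c • u) t) :=
            mul_le_mul_of_nonneg_left h1 hc
        _ = runSup (c • u) t := by field_simp

lemma aux_exists_decay (M σ a : ℝ) (hσ : 0 < σ) (ha : 0 < a) (hMa : 0 < M / a) :
    ∃ L, 1 ≤ L ∧ M * Real.exp (-σ * L) ≤ a := by
  refine ⟨max 1 (σ⁻¹ * Real.log (M / a)), le_max_left _ _, ?_⟩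
  set L := max 1 (σ⁻¹ * Real.log (M / a)) with hLdef
  have hL1 : (1:ℝ) ≤ L := le_max_left _ _
  have hσL : Real.log (M / a) ≤ σ * L := by
    rcases le_or_gt (Real.log (M / a)) σ with h | h
    · nlinarith
    · have h2 : σ⁻¹ * Real.log (M / a) ≤ L := le_max_right _ _
      have h3 : σ * (σ⁻¹ * Real.log (M / a)) ≤ σ * L :=
        mul_le_mul_of_nonneg_left h2 hσ.le
      calc Real.log (M / a) = σ * (σ⁻¹ * Real.log (M / a)) := by field_simp
        _ ≤ σ * L := h3
  have h1 : M / a ≤ Real.exp (σ * L) :=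
    calc M / a = Real.exp (Real.log (M / a)) := (Real.exp_log hMa).symm
      _ ≤ Real.exp (σ * L) := Real.exp_le_exp.2 hσL
  have hM : 0 < M := by
    have := (div_pos_iff.1 hMa)
    rcases this with ⟨h, _⟩ | ⟨_, h⟩
    · exact h
    · linarith
  have h2 : M * Real.exp (-σ * L) = M / Real.exp (σ * L) := by
    rw [neg_mul, Real.exp_neg, div_eq_mul_inv]
  rw [h2, div_le_iff₀ (Real.exp_pos _)]
  calc M = a * (M / a) := by field_simp
    _ ≤ a * Real.exp (σ * L) := mul_le_mul_of_nonneg_left h1 ha.le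

lemma aux_uniform_bound {M σ : ℝ} {b : ℝ → ℝ} (hES : sys.IsES M σ)
    (hrob : sys.IsRobust b) (hsc : sys.StrictlyCausal) :
    ∃ C : ℝ, 0 < C ∧ ∀ u ∈ sys.inputs, ∀ t : ℝ, 0 ≤ t →
      ‖sys.trans t 0 u‖ ≤ C * runSup u t := by
  obtain ⟨hM, hσ, hdecay⟩ := hES
  obtain ⟨hbmono, hbnn, hbrob⟩ := hrob
  obtain ⟨L, hL1, hLd⟩ := aux_exists_decay M σ (1/2) hσ (by norm_num)
    (by positivity)
  have hL0 : (0:ℝ) < L := lt_of_lt_of_le one_pos hL1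
  refine ⟨2 * b L + 1, by have := hbnn L; linarith, ?_⟩
  set C := 2 * b L + 1 with hCdef
  have hbL0 : 0 ≤ b L := hbnn L
  have hbLC : b L ≤ C := by linarith
  have hC0 : 0 < C := by linarith
  have key : ∀ n : ℕ, ∀ u ∈ sys.inputs, ∀ t : ℝ, 0 ≤ t → t ≤ (n + 1) * L →
      ‖sys.trans t 0 u‖ ≤ C * runSup u t := by
    intro n
    induction n with
    | zero =>
      intro u hu t ht0 htL
      have htL' : t ≤ L := by push_cast at htL; linarith
      have h1 : ‖sys.trans t 0 u‖ ≤ b t * runSup u t := hbrob u hu t ht0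
      have h2 : b t ≤ b L := hbmono (Set.mem_Ici.2 ht0) (Set.mem_Ici.2 hL0.le) htL'
      have h3 : 0 ≤ runSup u t := aux_runSup_nonneg u t
      calc ‖sys.trans t 0 u‖ ≤ b t * runSup u t := h1
        _ ≤ b L * runSup u t := mul_le_mul_of_nonneg_right h2 h3
        _ ≤ C * runSup u t := mul_le_mul_of_nonneg_right hbLC h3
    | succ n ih =>
      intro u hu t ht0 htL
      by_cases hcase : t ≤ (n + 1) * L
      · exact ih u hu t ht0 hcase
      push_neg at hcase
      have hn0 : (0:ℝ) ≤ (n:ℝ) := Nat.cast_nonneg n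
      have htgtL : L < t := by nlinarith
      set τ := t - L with hτdef
      have hτ0 : 0 < τ := by simp only [hτdef]; linarith
      have hτt : τ ≤ t := by simp only [hτdef]; linarith
      have hτn : τ ≤ ((n:ℝ) + 1) * L := by
        push_cast at htL; simp only [hτdef]; nlinarith
      have hrun0 : 0 ≤ runSup u t := aux_runSup_nonneg u t
      set v : ℝ → U := fun s => if s < τ then u s else (0 : ℝ → U) (s - τ)
        with hvdef
      have hv : v ∈ sys.inputs := sys.concat_lt_mem u hu 0 sys.zero_mem τ hτ0
      have hvs : ∀ s, v s = if s < τ then u s else 0 := fun s => by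
        simp only [hvdef, Pi.zero_apply]
      set w : ℝ → U := u + (-1 : ℝ) • v with hwdef
      have hw : w ∈ sys.inputs := sys.add_mem u hu _ (sys.smul_mem v hv (-1))
      have hws : ∀ s, w s = u s - v s := fun s => by
        simp [hwdef, sub_eq_add_neg]
      -- split
      have hsplit : sys.trans t 0 u = sys.trans t 0 v + sys.trans t 0 w := by
        have huvw : u = v + w := by
          funext s
          simp only [Pi.add_apply, hws]
          abel
        conv_lhs => rw [huvw]
        exact aux_transAdd sys t ht0 v hv w hw
      -- v part
      have hsv := sys.shift_mem v hv τ hτ0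
      have htτ : t - τ = L := by simp only [hτdef]; ring
      have hsg_v : sys.trans t 0 v
          = sys.trans L (sys.trans τ 0 v) (fun s => v (s + τ)) := by
        have h := sys.semigroup 0 v hv τ t hτ0.le hτt
        rwa [htτ] at h
      have hδv : sys.trans L (sys.trans τ 0 v) (fun s => v (s + τ))
          = sys.trans L (sys.trans τ 0 v) 0 := by
        apply sys.causality L hL0.le _ _ hsv 0 sys.zero_mem
        intro s hs0 _
        simp only [hvs]
        rw [if_neg (by linarith)]
        simp
      have hrunvτ : runSup v τ ≤ runSup u t := by
        apply aux_runSup_le _ _ _ hrun0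
        intro s hs
        rcases lt_or_ge s τ with h | h
        · rw [hvs, if_pos h]
          exact aux_le_runSup sys u hu ⟨hs.1, by linarith [hs.2]⟩
        · rw [hvs, if_neg (not_lt.2 h)]
          simpa using hrun0
      have hIHv : ‖sys.trans τ 0 v‖ ≤ C * runSup u t := by
        calc ‖sys.trans τ 0 v‖ ≤ C * runSup v τ := ih v hv τ hτ0.le hτn
          _ ≤ C * runSup u t := mul_le_mul_of_nonneg_left hrunvτ hC0.le
      have hvpart : ‖sys.trans t 0 v‖ ≤ (1/2) * (C * runSup u t) := by
        rw [hsg_v, hδv]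
        calc ‖sys.trans L (sys.trans τ 0 v) 0‖
            ≤ M * Real.exp (-σ * L) * ‖sys.trans τ 0 v‖ :=
              hdecay _ L hL0.le
          _ ≤ (1/2) * ‖sys.trans τ 0 v‖ :=
              mul_le_mul_of_nonneg_right hLd (norm_nonneg _)
          _ ≤ (1/2) * (C * runSup u t) :=
              mul_le_mul_of_nonneg_left hIHv (by norm_num)
      -- w part
      have hw0 : sys.trans τ 0 w = 0 := by
        have h := hsc τ hτ0 w hw 0 sys.zero_mem (fun s hs0 hsτ => by
          simp only [hws, hvs, if_pos hsτ, Pi.zero_apply, sub_self])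
        rw [h]
        exact aux_trans00 sys τ hτ0.le
      have hsw := sys.shift_mem w hw τ hτ0
      have hsg_w : sys.trans t 0 w = sys.trans L 0 (fun s => w (s + τ)) := by
        have h := sys.semigroup 0 w hw τ t hτ0.le hτt
        rwa [htτ, hw0] at h
      have hrunw : runSup (fun s => w (s + τ)) L ≤ runSup u t := by
        apply aux_runSup_le _ _ _ hrun0
        intro s hs
        have hnloc : w (s + τ) = u (s + τ) := by
          rw [hws, hvs, if_neg (by linarith [hs.1])]
          simp
        rw [hnloc]
        exact aux_le_runSup sys u hu ⟨by linarith [hs.1, hτ0.le],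
          by simp only [hτdef]; linarith [hs.2]⟩
      have hwpart : ‖sys.trans t 0 w‖ ≤ b L * runSup u t := by
        rw [hsg_w]
        calc ‖sys.trans L 0 (fun s => w (s + τ))‖
            ≤ b L * runSup (fun s => w (s + τ)) L := hbrob _ hsw L hL0.le
          _ ≤ b L * runSup u t := mul_le_mul_of_nonneg_left hrunw hbL0
      calc ‖sys.trans t 0 u‖ = ‖sys.trans t 0 v + sys.trans t 0 w‖ := by
            rw [hsplit]
        _ ≤ ‖sys.trans t 0 v‖ + ‖sys.trans t 0 w‖ := norm_add_le _ _
        _ ≤ (1/2) * (C * runSup u t) + b L * runSup u t := by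
            linarith [hvpart, hwpart]
        _ ≤ C * runSup u t := by nlinarith
  intro u hu t ht0
  apply key ⌈t⌉₊ u hu t ht0
  have h1 := Nat.le_ceil t
  have h2 : (0:ℝ) ≤ (⌈t⌉₊ : ℝ) := Nat.cast_nonneg _
  nlinarith

lemma aux_exists_runSup_one (T : ℝ) (hT : 0 ≤ T) :
    ∃ u ∈ sys.inputs, runSup u T = 1 := by
  obtain ⟨v₀, hv₀⟩ := sys.U_nontrivial
  obtain ⟨u₀, hu₀, hval⟩ := sys.exists_input_val (‖v₀‖⁻¹ • v₀)
  have hv₀n : ‖v₀‖ ≠ 0 := norm_ne_zero_iff.2 hv₀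
  have hnorm : ‖u₀ 0‖ = 1 := by
    rw [hval, norm_smul, norm_inv, norm_norm]
    field_simp
  have hρ1 : 1 ≤ runSup u₀ T := by
    rw [← hnorm]
    exact aux_le_runSup sys u₀ hu₀ ⟨le_rfl, hT⟩
  set ρ := runSup u₀ T with hρdef
  have hρ0 : 0 < ρ := by linarith
  refine ⟨ρ⁻¹ • u₀, sys.smul_mem u₀ hu₀ _, ?_⟩
  rw [aux_runSup_smul sys u₀ hu₀ T hT ρ⁻¹ (by positivity)]
  field_simp
  exact hρdef.symm

lemma aux_gain_mem {C : ℝ}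
    (hbound : ∀ u ∈ sys.inputs, ∀ t : ℝ, 0 ≤ t → ‖sys.trans t 0 u‖ ≤ C * runSup u t) :
    ∀ r ∈ {r | ∃ t ≥ (0 : ℝ), ∃ u ∈ sys.inputs,
        runSup u t = 1 ∧ r = ‖sys.out (sys.trans t 0 u)‖},
      r ≤ ‖sys.out‖ * C := by
  rintro r ⟨t, ht, u, hu, h1, rfl⟩
  calc ‖sys.out (sys.trans t 0 u)‖ ≤ ‖sys.out‖ * ‖sys.trans t 0 u‖ :=
        ContinuousLinearMap.le_opNorm _ _
    _ ≤ ‖sys.out‖ * (C * runSup u t) :=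
        mul_le_mul_of_nonneg_left (hbound u hu t ht) (norm_nonneg _)
    _ = ‖sys.out‖ * C := by rw [h1, mul_one]

lemma aux_zero_mem_gain :
    (0:ℝ) ∈ {r | ∃ t ≥ (0 : ℝ), ∃ u ∈ sys.inputs,
        runSup u t = 1 ∧ r = ‖sys.out (sys.trans t 0 u)‖} := by
  obtain ⟨u, hu, h1⟩ := aux_exists_runSup_one sys 0 le_rfl
  refine ⟨0, le_rfl, u, hu, h1, ?_⟩
  rw [sys.identity 0 u hu]
  simp

lemma aux_gain_nonneg {C : ℝ}
    (hbound : ∀ u ∈ sys.inputs, ∀ t : ℝ, 0 ≤ t → ‖sys.trans t 0 u‖ ≤ C * runSup u t) :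
    0 ≤ sys.gain :=
  le_csSup ⟨‖sys.out‖ * C, aux_gain_mem sys hbound⟩ (aux_zero_mem_gain sys)

lemma aux_val_le_gain {C : ℝ} (hC : 0 < C)
    (hbound : ∀ u ∈ sys.inputs, ∀ t : ℝ, 0 ≤ t → ‖sys.trans t 0 u‖ ≤ C * runSup u t)
    (u : ℝ → U) (hu : u ∈ sys.inputs) (t : ℝ) (ht : 0 ≤ t)
    (hle : runSup u t ≤ 1) : ‖sys.out (sys.trans t 0 u)‖ ≤ sys.gain := by
  have hbdd : BddAbove {r | ∃ t ≥ (0 : ℝ), ∃ u ∈ sys.inputs,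
      runSup u t = 1 ∧ r = ‖sys.out (sys.trans t 0 u)‖} :=
    ⟨‖sys.out‖ * C, aux_gain_mem sys hbound⟩
  have hg0 : 0 ≤ sys.gain := aux_gain_nonneg sys hbound
  rcases (aux_runSup_nonneg u t).eq_or_lt with hρ | hρ
  · -- runSup u t = 0 : the input vanishes on [0, t]
    have hzero : sys.trans t 0 u = 0 := by
      have hcaus : sys.trans t 0 u = sys.trans t 0 0 := by
        apply sys.causality t ht 0 u hu 0 sys.zero_mem
        intro s hs0 hst
        have h2 := aux_le_runSup sys u hu (⟨hs0, hst⟩ : s ∈ Set.Icc 0 t)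
        rw [← hρ] at h2
        have : ‖u s‖ = 0 := le_antisymm h2 (norm_nonneg _)
        simpa using this
      rw [hcaus]
      exact aux_trans00 sys t ht
    rw [hzero]
    simpa using hg0
  · set ρ := runSup u t with hρdef
    set u' : ℝ → U := ρ⁻¹ • u with hu'def
    have hu' : u' ∈ sys.inputs := sys.smul_mem u hu _
    have hru' : runSup u' t = 1 := by
      rw [hu'def, aux_runSup_smul sys u hu t ht ρ⁻¹ (by positivity)]
      field_simp
      exact hρdef.symm
    have hmem : ‖sys.out (sys.trans t 0 u')‖ ∈ {r | ∃ t ≥ (0 : ℝ),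
        ∃ u ∈ sys.inputs, runSup u t = 1 ∧ r = ‖sys.out (sys.trans t 0 u)‖} :=
      ⟨t, ht, u', hu', hru', rfl⟩
    have hle' : ‖sys.out (sys.trans t 0 u')‖ ≤ sys.gain := le_csSup hbdd hmem
    have hsmul : sys.trans t 0 u = ρ • sys.trans t 0 u' := by
      have h1 : u = ρ • u' := by
        rw [hu'def, smul_smul]
        field_simp
        rw [one_smul]
      calc sys.trans t 0 u = sys.trans t 0 (ρ • u') := by rw [← h1]
        _ = ρ • sys.trans t 0 u' := aux_transSmul sys t ht u' hu' ρ
    rw [hsmul, map_smul, norm_smul, Real.norm_eq_abs, abs_of_nonneg hρ.le]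
    nlinarith [norm_nonneg (sys.out (sys.trans t 0 u'))]

lemma aux_asymp_elem {C : ℝ} (hC : 0 < C)
    (hbound : ∀ u ∈ sys.inputs, ∀ t : ℝ, 0 ≤ t → ‖sys.trans t 0 u‖ ≤ C * runSup u t) :
    ∀ r ∈ {r | ∃ u ∈ sys.inputs, supNorm u = 1 ∧
        r = limsup (fun t => ‖sys.out (sys.trans t 0 u)‖) atTop},
      0 ≤ r ∧ r ≤ sys.gain := by
  rintro r ⟨u, hu, hsup, rfl⟩
  have hbddIci : BddAbove ((fun s => ‖u s‖) '' Set.Ici 0) := by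
    by_contra hnb
    rw [supNorm, Real.sSup_of_not_bddAbove hnb] at hsup
    norm_num at hsup
  have hrun_le : ∀ t : ℝ, 0 ≤ t → runSup u t ≤ 1 := by
    intro t ht
    have h1 : runSup u t ≤ supNorm u := by
      apply csSup_le_csSup hbddIci
      · exact ⟨‖u 0‖, 0, ⟨le_rfl, ht⟩, rfl⟩
      · exact Set.image_mono (fun s hs => hs.1)
    rw [hsup] at h1
    exact h1
  have hf_le : ∀ t : ℝ, 0 ≤ t → ‖sys.out (sys.trans t 0 u)‖ ≤ sys.gain :=
    fun t ht => aux_val_le_gain sys hC hbound u hu t ht (hrun_le t ht)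
  set f : ℝ → ℝ := fun t => ‖sys.out (sys.trans t 0 u)‖ with hfdef
  set Sf : Set ℝ := {a | ∀ᶠ t in atTop, f t ≤ a} with hSfdef
  have hgmem : sys.gain ∈ Sf := by
    refine eventually_atTop.2 ⟨0, fun t ht => hf_le t ht⟩
  have hSlb : ∀ a ∈ Sf, 0 ≤ a := by
    intro a ha
    obtain ⟨t, hfa, ht0⟩ := (ha.and (eventually_ge_atTop (0:ℝ))).exists
    exact le_trans (norm_nonneg _) hfa
  have hls : limsup f atTop = sInf Sf := limsup_eq
  constructor
  · rw [hls]
    exact le_csInf ⟨sys.gain, hgmem⟩ hSlb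
  · rw [hls]
    exact csInf_le ⟨0, hSlb⟩ hgmem

lemma aux_construction {M σ C : ℝ} (hM : 0 < M) (hσ : 0 < σ)
    (hdecay : ∀ x : X, ∀ t ≥ (0:ℝ), ‖sys.trans t x 0‖ ≤ M * Real.exp (-σ * t) * ‖x‖)
    (hsc : sys.StrictlyCausal) (hC : 0 < C)
    (hbound : ∀ u ∈ sys.inputs, ∀ t : ℝ, 0 ≤ t → ‖sys.trans t 0 u‖ ≤ C * runSup u t)
    (T : ℝ) (hT : 0 < T) (u : ℝ → U) (hu : u ∈ sys.inputs) (hru : runSup u T = 1)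
    (ε : ℝ) (hε : 0 < ε) :
    ∃ r ∈ {r | ∃ u ∈ sys.inputs, supNorm u = 1 ∧
        r = limsup (fun t => ‖sys.out (sys.trans t 0 u)‖) atTop},
      ‖sys.out (sys.trans T 0 u)‖ - ε ≤ r := by
  set K := ‖sys.out‖ * M * C + 1 with hKdef
  have hK0 : 0 < K := by positivity
  have hKout : ‖sys.out‖ * M * C ≤ K := by simp only [hKdef]; linarith
  obtain ⟨S, hS1, hSd⟩ := aux_exists_decay K σ ε hσ hε (by positivity)
  have hS0 : (0:ℝ) < S := lt_of_lt_of_le one_pos hS1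
  set P := S + T + 1 with hPdef
  have hP0 : (0:ℝ) < P := by simp only [hPdef]; linarith
  have hSTP : S + T < P := by simp only [hPdef]; linarith
  set v₁ : ℝ → U := fun s => if s < S then (0 : ℝ → U) s else u (s - S) with hv₁def
  have hv₁ : v₁ ∈ sys.inputs := sys.concat_lt_mem 0 sys.zero_mem u hu S hS0
  set w₀ : ℝ → U := fun s => if s ≤ S + T then v₁ s else (0 : ℝ → U) (s - (S + T))
    with hw₀def
  have hw₀ : w₀ ∈ sys.inputs :=
    sys.concat_le_mem v₁ hv₁ 0 sys.zero_mem (S + T) (by linarith)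
  set w : ℝ → U := fun t => w₀ (t - P * ⌊t / P⌋) with hwdef
  have hw : w ∈ sys.inputs := sys.periodic_ext_mem w₀ hw₀ P hP0
  -- pointwise description of w₀
  have hw₀eval : ∀ s, w₀ s = if s ≤ S + T then (if s < S then 0 else u (s - S))
      else 0 := by
    intro s
    simp only [hw₀def, hv₁def, Pi.zero_apply]
  have hw₀norm : ∀ s, ‖w₀ s‖ ≤ 1 := by
    intro s
    rw [hw₀eval]
    rcases le_or_gt s (S + T) with h1 | h1
    · rw [if_pos h1]
      rcases lt_or_ge s S with h2 | h2
      · rw [if_pos h2]; simp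
      · rw [if_neg (not_lt.2 h2)]
        have := aux_le_runSup sys u hu (⟨by linarith, by linarith⟩ :
          s - S ∈ Set.Icc 0 T)
        rw [hru] at this
        exact this
    · rw [if_neg (not_le.2 h1)]
      simp
  -- fractional part facts
  have hfrac : ∀ t : ℝ, 0 ≤ t - P * ⌊t / P⌋ ∧ t - P * ⌊t / P⌋ < P := by
    intro t
    have h1 : (⌊t / P⌋ : ℝ) ≤ t / P := Int.floor_le _
    have h2 : t / P < ⌊t / P⌋ + 1 := Int.lt_floor_add_one _
    have ht : P * (t / P) = t := by field_simp
    constructor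
    · nlinarith
    · nlinarith
  have hweval : ∀ s : ℝ, 0 ≤ s → s < P → w s = w₀ s := by
    intro s hs0 hsP
    have hfl : ⌊s / P⌋ = 0 := by
      rw [Int.floor_eq_zero_iff]
      constructor
      · positivity
      · rw [div_lt_one hP0]; exact hsP
    simp only [hwdef, hfl, Int.cast_zero, mul_zero, sub_zero]
  have hwP : ∀ t : ℝ, w (t + P) = w t := by
    intro t
    have hdiv : (t + P) / P = t / P + 1 := by field_simp
    simp only [hwdef, hdiv, Int.floor_add_one]
    congr 1
    push_cast
    ring
  have hwkP : ∀ k : ℕ, ∀ t : ℝ, w (t + k * P) = w t := by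
    intro k
    induction k with
    | zero => intro t; simp
    | succ k ih =>
      intro t
      have harg : t + ((k:ℝ) + 1) * P = (t + k * P) + P := by ring
      push_cast
      rw [harg, hwP, ih]
  have hwnorm : ∀ s : ℝ, ‖w s‖ ≤ 1 := fun s => hw₀norm _
  -- supNorm w = 1
  have hwIciBdd : BddAbove ((fun s => ‖w s‖) '' Set.Ici 0) := by
    refine ⟨1, ?_⟩
    rintro x ⟨s, -, rfl⟩
    exact hwnorm s
  have hsupw : supNorm w = 1 := by
    apply le_antisymm
    · apply Real.sSup_le _ one_pos.le
      rintro x ⟨s, -, rfl⟩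
      exact hwnorm s
    · by_contra hlt
      push_neg at hlt
      have hne : ((fun s => ‖u s‖) '' Set.Icc 0 T).Nonempty :=
        ⟨‖u 0‖, 0, ⟨le_rfl, hT.le⟩, rfl⟩
      have hlt' : supNorm w < sSup ((fun s => ‖u s‖) '' Set.Icc 0 T) := by
        rw [show sSup ((fun s => ‖u s‖) '' Set.Icc 0 T) = runSup u T from rfl, hru]
        exact hlt
      obtain ⟨x, ⟨s, hsmem, rfl⟩, hx⟩ := exists_lt_of_lt_csSup hne hlt'
      have hws : w (S + s) = u s := by
        rw [hweval (S + s) (by linarith [hsmem.1]) (by linarith [hsmem.2]),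
          hw₀eval, if_pos (by linarith [hsmem.2]), if_neg (by linarith [hsmem.1])]
        congr 1
        ring
      have hle : ‖w (S + s)‖ ≤ supNorm w :=
        le_csSup hwIciBdd ⟨S + s, Set.mem_Ici.2 (by linarith [hsmem.1]), rfl⟩
      rw [hws] at hle
      linarith
  have hrunw : ∀ t : ℝ, runSup w t ≤ 1 := by
    intro t
    apply Real.sSup_le _ one_pos.le
    rintro x ⟨s, -, rfl⟩
    exact hwnorm s
  set c := sys.trans T 0 u with hcdef
  have hST0 : (0:ℝ) ≤ S + T := by linarith
  -- the state at time S + T equals c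
  have hc : sys.trans (S + T) 0 w = c := by
    have hsg := sys.semigroup 0 w hw S (S + T) hS0.le (by linarith)
    rw [show S + T - S = T by ring] at hsg
    have hw_zero : sys.trans S 0 w = 0 := by
      have h := hsc S hS0 w hw 0 sys.zero_mem (fun s hs0 hsS => by
        rw [hweval s hs0 (by linarith), hw₀eval, if_pos (by linarith),
          if_pos hsS]
        simp)
      rw [h]
      exact aux_trans00 sys S hS0.le
    have hshift := sys.shift_mem w hw S hS0
    have hcaus : sys.trans T 0 (fun s => w (s + S)) = sys.trans T 0 u := by
      apply sys.causality T hT.le 0 _ hshift u hu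
      intro s hs0 hsT
      rw [hweval (s + S) (by linarith) (by linarith), hw₀eval,
        if_pos (by linarith), if_neg (by linarith)]
      congr 1
      ring
    rw [hsg, hw_zero, hcaus]
  -- state estimate at the sampling times
  have hyk : ∀ k : ℕ, ‖sys.trans ((k:ℝ) * P + (S + T)) 0 w - c‖
      ≤ M * C * Real.exp (-σ * S) := by
    intro k
    have hkP0 : (0:ℝ) ≤ (k:ℝ) * P := by positivity
    have hsg := sys.semigroup 0 w hw ((k:ℝ) * P) ((k:ℝ) * P + (S + T)) hkP0
      (by linarith)
    rw [show (k:ℝ) * P + (S + T) - (k:ℝ) * P = S + T by ring] at hsg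
    have hshift_eq : (fun s => w (s + (k:ℝ) * P)) = w := funext fun s => hwkP k s
    rw [hshift_eq] at hsg
    set xk := sys.trans ((k:ℝ) * P) 0 w with hxkdef
    have hlin := sys.linearity (S + T) hST0 xk 0 0 sys.zero_mem w hw 1 1
    have hlin' : sys.trans (S + T) xk w
        = sys.trans (S + T) xk 0 + sys.trans (S + T) 0 w := by
      simpa using hlin
    rw [hsg, hlin', hc, add_sub_cancel_right]
    have hxk : ‖xk‖ ≤ C := by
      calc ‖xk‖ ≤ C * runSup w ((k:ℝ) * P) := hbound w hw _ hkP0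
        _ ≤ C * 1 := mul_le_mul_of_nonneg_left (hrunw _) hC.le
        _ = C := mul_one C
    have hES1 : ‖sys.trans (S + T) xk 0‖ ≤ M * Real.exp (-σ * (S + T)) * ‖xk‖ :=
      hdecay xk (S + T) hST0
    have hexp : Real.exp (-σ * (S + T)) ≤ Real.exp (-σ * S) :=
      Real.exp_le_exp.2 (by nlinarith)
    have he0 : (0:ℝ) ≤ Real.exp (-σ * (S + T)) := (Real.exp_pos _).le
    calc ‖sys.trans (S + T) xk 0‖ ≤ M * Real.exp (-σ * (S + T)) * ‖xk‖ := hES1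
      _ ≤ M * Real.exp (-σ * (S + T)) * C :=
          mul_le_mul_of_nonneg_left hxk (by positivity)
      _ ≤ M * Real.exp (-σ * S) * C :=
          mul_le_mul_of_nonneg_right
            (mul_le_mul_of_nonneg_left hexp hM.le) hC.le
      _ = M * C * Real.exp (-σ * S) := by ring
  -- output estimate
  set f : ℝ → ℝ := fun t => ‖sys.out (sys.trans t 0 w)‖ with hfdef
  have hout : ∀ k : ℕ, ‖sys.out c‖ - ε ≤ f ((k:ℝ) * P + (S + T)) := by
    intro k
    set y := sys.trans ((k:ℝ) * P + (S + T)) 0 w with hydef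
    have h1 : ‖sys.out c‖ - ‖sys.out y‖ ≤ ‖sys.out c - sys.out y‖ :=
      norm_sub_norm_le _ _
    have h2 : ‖sys.out c - sys.out y‖ = ‖sys.out (c - y)‖ := by rw [map_sub]
    have h3 : ‖sys.out (c - y)‖ ≤ ‖sys.out‖ * ‖c - y‖ :=
      ContinuousLinearMap.le_opNorm _ _
    have h4 : ‖c - y‖ = ‖y - c‖ := norm_sub_rev _ _
    have h5 := hyk k
    have he1 : (0:ℝ) < Real.exp (-σ * S) := Real.exp_pos _
    have h6 : ‖sys.out‖ * ‖y - c‖ ≤ ‖sys.out‖ * (M * C * Real.exp (-σ * S)) :=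
      mul_le_mul_of_nonneg_left h5 (norm_nonneg _)
    have h7 : ‖sys.out‖ * (M * C * Real.exp (-σ * S)) ≤ K * Real.exp (-σ * S) := by
      calc ‖sys.out‖ * (M * C * Real.exp (-σ * S))
          = (‖sys.out‖ * M * C) * Real.exp (-σ * S) := by ring
        _ ≤ K * Real.exp (-σ * S) :=
            mul_le_mul_of_nonneg_right hKout he1.le
    have : ‖sys.out c‖ - ‖sys.out y‖ ≤ ε := by
      calc ‖sys.out c‖ - ‖sys.out y‖ ≤ ‖sys.out (c - y)‖ := by rw [← h2]; exact h1
        _ ≤ ‖sys.out‖ * ‖y - c‖ := by rw [← h4]; exact h3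
        _ ≤ K * Real.exp (-σ * S) := le_trans h6 h7
        _ ≤ ε := hSd
    simp only [hfdef]
    linarith
  have hfreq : ∃ᶠ t in atTop, ‖sys.out c‖ - ε ≤ f t := by
    rw [Filter.frequently_atTop]
    intro a
    refine ⟨(⌈a⌉₊ : ℝ) * P + (S + T), ?_, hout ⌈a⌉₊⟩
    have h1 := Nat.le_ceil a
    have h2 : (0:ℝ) ≤ (⌈a⌉₊ : ℝ) := Nat.cast_nonneg _
    have hP1 : (1:ℝ) ≤ P := by simp only [hPdef]; linarith
    have h3 : (⌈a⌉₊ : ℝ) ≤ (⌈a⌉₊ : ℝ) * P := le_mul_of_one_le_right h2 hP1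
    linarith
  have hbddf : IsBoundedUnder (· ≤ ·) atTop f := by
    apply isBoundedUnder_of_eventually_le (a := ‖sys.out‖ * C)
    refine eventually_atTop.2 ⟨0, fun t ht => ?_⟩
    calc f t ≤ ‖sys.out‖ * ‖sys.trans t 0 w‖ := ContinuousLinearMap.le_opNorm _ _
      _ ≤ ‖sys.out‖ * (C * runSup w t) :=
          mul_le_mul_of_nonneg_left (hbound w hw t ht) (norm_nonneg _)
      _ ≤ ‖sys.out‖ * (C * 1) :=
          mul_le_mul_of_nonneg_left
            (mul_le_mul_of_nonneg_left (hrunw t) hC.le) (norm_nonneg _)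
      _ = ‖sys.out‖ * C := by ring
  have hlimsup : ‖sys.out c‖ - ε ≤ limsup f atTop :=
    le_limsup_of_frequently_le hfreq hbddf
  exact ⟨limsup f atTop, ⟨w, hw, hsupw, rfl⟩, hlimsup⟩

end Aux

open LinearControlSystem in
/-- Theorem 4.3, equation (4.6): for an ES, robust, strictly causal linear control system,
the minimum IOS-gain, the minimum output asymptotic gain, and `sup_{T>0} V(T)` coincide. -/
theorem statement_6 {X Y U : Type*}
    [NormedAddCommGroup X] [NormedSpace ℝ X]
    [NormedAddCommGroup Y] [NormedSpace ℝ Y]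
    [NormedAddCommGroup U] [NormedSpace ℝ U]
    (sys : LinearControlSystem X Y U)
    (hES : sys.ES) (hrob : sys.Robust) (hsc : sys.StrictlyCausal) :
    sys.gain = sys.asympGain ∧
    sys.gain = sSup {r | ∃ T > (0 : ℝ), r = sys.V T} := by
  obtain ⟨M, σ, hES'⟩ := hES
  obtain ⟨b, hrob'⟩ := hrob
  obtain ⟨C, hC, hbound⟩ := aux_uniform_bound sys hES' hrob' hsc
  obtain ⟨hM, hσ, hdecay⟩ := hES'
  have hD0 : (0:ℝ) ≤ ‖sys.out‖ * C := mul_nonneg (norm_nonneg _) hC.le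
  have hgain_def : sys.gain = sSup {r | ∃ t ≥ (0 : ℝ), ∃ u ∈ sys.inputs,
      runSup u t = 1 ∧ r = ‖sys.out (sys.trans t 0 u)‖} := rfl
  have hbddg : BddAbove {r | ∃ t ≥ (0 : ℝ), ∃ u ∈ sys.inputs,
      runSup u t = 1 ∧ r = ‖sys.out (sys.trans t 0 u)‖} :=
    ⟨‖sys.out‖ * C, aux_gain_mem sys hbound⟩
  have hgain0 : 0 ≤ sys.gain := aux_gain_nonneg sys hbound
  -- bounds for the V-sets
  have hVmem : ∀ T : ℝ, ∀ r ∈ {r | ∃ u ∈ sys.inputs, runSup u T = 1 ∧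
      r = ‖sys.out (sys.trans T 0 u)‖}, 0 ≤ T → r ≤ ‖sys.out‖ * C := by
    rintro T r ⟨u, hu, h1, rfl⟩ hT
    calc ‖sys.out (sys.trans T 0 u)‖ ≤ ‖sys.out‖ * ‖sys.trans T 0 u‖ :=
          ContinuousLinearMap.le_opNorm _ _
      _ ≤ ‖sys.out‖ * (C * runSup u T) :=
          mul_le_mul_of_nonneg_left (hbound u hu T hT) (norm_nonneg _)
      _ = ‖sys.out‖ * C := by rw [h1, mul_one]
  have hV_nonneg : ∀ T : ℝ, 0 ≤ sys.V T := by
    intro T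
    apply Real.sSup_nonneg
    rintro r ⟨u, hu, h1, rfl⟩
    exact norm_nonneg _
  have hV_le_D : ∀ T : ℝ, 0 < T → sys.V T ≤ ‖sys.out‖ * C := by
    intro T hT
    exact Real.sSup_le (fun r hr => hVmem T r hr hT.le) hD0
  have hvsup_bdd : BddAbove {r | ∃ T > (0 : ℝ), r = sys.V T} := by
    refine ⟨‖sys.out‖ * C, ?_⟩
    rintro r ⟨T, hT, rfl⟩
    exact hV_le_D T hT
  have hvsup0 : 0 ≤ sSup {r | ∃ T > (0 : ℝ), r = sys.V T} := by
    have h1 : sys.V 1 ≤ sSup {r | ∃ T > (0 : ℝ), r = sys.V T} :=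
      le_csSup hvsup_bdd ⟨1, one_pos, rfl⟩
    linarith [hV_nonneg 1]
  -- Part 2 : gain = sup_{T>0} V(T)
  have hpart2 : sys.gain = sSup {r | ∃ T > (0 : ℝ), r = sys.V T} := by
    apply le_antisymm
    · rw [hgain_def]
      apply Real.sSup_le _ hvsup0
      rintro r ⟨t, ht, u, hu, h1, rfl⟩
      rcases ht.eq_or_lt with h0 | hpos
      · rw [← h0, sys.identity 0 u hu]
        simpa using hvsup0
      · have hmem : ‖sys.out (sys.trans t 0 u)‖ ∈ {r | ∃ u ∈ sys.inputs,
            runSup u t = 1 ∧ r = ‖sys.out (sys.trans t 0 u)‖} := ⟨u, hu, h1, rfl⟩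
        have hle1 : ‖sys.out (sys.trans t 0 u)‖ ≤ sys.V t :=
          le_csSup ⟨‖sys.out‖ * C, fun r hr => hVmem t r hr ht⟩ hmem
        have hle2 : sys.V t ≤ sSup {r | ∃ T > (0 : ℝ), r = sys.V T} :=
          le_csSup hvsup_bdd ⟨t, hpos, rfl⟩
        linarith
    · apply Real.sSup_le _ hgain0
      rintro r ⟨T, hT, rfl⟩
      apply Real.sSup_le _ hgain0
      rintro r ⟨u, hu, h1, rfl⟩
      rw [hgain_def]
      exact le_csSup hbddg ⟨T, hT.le, u, hu, h1, rfl⟩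
  -- Part 1 : gain = asympGain
  have hasymp_def : sys.asympGain = sSup {r | ∃ u ∈ sys.inputs, supNorm u = 1 ∧
      r = limsup (fun t => ‖sys.out (sys.trans t 0 u)‖) atTop} := rfl
  have haelem := aux_asymp_elem sys hC hbound
  have habdd : BddAbove {r | ∃ u ∈ sys.inputs, supNorm u = 1 ∧
      r = limsup (fun t => ‖sys.out (sys.trans t 0 u)‖) atTop} :=
    ⟨sys.gain, fun r hr => (haelem r hr).2⟩
  have hag_le : sys.asympGain ≤ sys.gain := by
    rw [hasymp_def]
    exact Real.sSup_le (fun r hr => (haelem r hr).2) hgain0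
  -- asympGain is nonnegative
  have hag0 : 0 ≤ sys.asympGain := by
    obtain ⟨u₁, hu₁, hru₁⟩ := aux_exists_runSup_one sys 1 zero_le_one
    obtain ⟨r₁, hr₁mem, -⟩ := aux_construction sys hM hσ hdecay hsc hC hbound
      1 one_pos u₁ hu₁ hru₁ 1 one_pos
    have h1 : r₁ ≤ sys.asympGain := le_csSup habdd hr₁mem
    linarith [(haelem r₁ hr₁mem).1]
  have hge : sys.gain ≤ sys.asympGain := by
    apply le_of_forall_pos_le_add
    intro ε hε
    have hgain_ne : {r | ∃ t ≥ (0 : ℝ), ∃ u ∈ sys.inputs,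
        runSup u t = 1 ∧ r = ‖sys.out (sys.trans t 0 u)‖}.Nonempty :=
      ⟨0, aux_zero_mem_gain sys⟩
    have hlt : sys.gain - ε / 2 < sSup {r | ∃ t ≥ (0 : ℝ), ∃ u ∈ sys.inputs,
        runSup u t = 1 ∧ r = ‖sys.out (sys.trans t 0 u)‖} := by
      rw [← hgain_def]; linarith
    obtain ⟨r, hrmem, hrgt⟩ := exists_lt_of_lt_csSup hgain_ne hlt
    obtain ⟨t, ht, u, hu, h1, hr⟩ := hrmem
    rcases ht.eq_or_lt with h0 | hpos
    · -- the witness time is 0, hence r = 0 and gain < ε/2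
      have hr0 : r = 0 := by
        rw [hr, ← h0, sys.identity 0 u hu]
        simp
      rw [hr0] at hrgt
      linarith
    · obtain ⟨r', hr'mem, hr'ge⟩ := aux_construction sys hM hσ hdecay hsc hC
        hbound t hpos u hu h1 (ε / 2) (by linarith)
      have h2 : r' ≤ sys.asympGain := le_csSup habdd hr'mem
      rw [← hr] at hr'ge
      linarith
  exact ⟨le_antisymm hge hag_le, hpart2⟩
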